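/- arXiv:1007.3402 — 2 statements merged into one kernel-verified Lean document; each statement's English description precedes it below -/
import Mathlib

section
/- Let P, L be n-dimensional linear subspaces of ℝ^{n+1} and M ⊂ B_ρ^{n+1}(0) a set containing 0 with the property that sup_{y∈M} dist(y, P) < ερ and sup_{y∈L∩B_ρ(0)} dist(y, M) ≤ ε₀ρ (so M is ε-close to P and ε₀-close to L in Hausdorff sense on the ball). If ε + ε₀ < 1/2, then the unit normals N of P and ν of L can be chosen so that ‖N − ν‖ ≤ 5(ε + ε₀)/2. -/
open Metric Set RealInnerProductSpace

/-- Let `P, L` be `n`-dimensional linear subspaces of `ℝ^{n+1}` and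
`M ⊆ B_ρ^{n+1}(0)` a set containing `0` with
`sup_{y ∈ M} dist(y, P) < ε ρ` and `sup_{y ∈ L ∩ B_ρ} dist(y, M) ≤ ε₀ ρ`.
If `ε + ε₀ < 1/2` then unit normals `N` of `P` and `ν` of `L` can be chosen with
`‖N - ν‖ ≤ 5(ε + ε₀)/2`. -/
theorem stmt13 (n : ℕ) (ρ ε ε₀ : ℝ) (hρ : 0 < ρ) (hε : 0 ≤ ε) (hε₀ : 0 ≤ ε₀)
    (hsum : ε + ε₀ < 1 / 2)
    (P L : Submodule ℝ (EuclideanSpace ℝ (Fin (n + 1))))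
    (hPd : Module.finrank ℝ P = n) (hLd : Module.finrank ℝ L = n)
    (M : Set (EuclideanSpace ℝ (Fin (n + 1))))
    (hM0 : 0 ∈ M) (hMb : M ⊆ Metric.ball 0 ρ)
    (hMP : ∀ y ∈ M, Metric.infDist y (P : Set (EuclideanSpace ℝ (Fin (n + 1)))) < ε * ρ)
    (hLM : ∀ y ∈ (L : Set (EuclideanSpace ℝ (Fin (n + 1)))) ∩ Metric.ball 0 ρ,
      Metric.infDist y M ≤ ε₀ * ρ) :
    ∃ N ν : EuclideanSpace ℝ (Fin (n + 1)),
      ‖N‖ = 1 ∧ ‖ν‖ = 1 ∧ N ∈ Pᗮ ∧ ν ∈ Lᗮ ∧ ‖N - ν‖ ≤ 5 * (ε + ε₀) / 2 := by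
  set s := ε + ε₀ with hs
  have hs0 : 0 ≤ s := by linarith
  -- dimensions of orthogonal complements
  have hdimP : Module.finrank ℝ Pᗮ = 1 := by
    have := Submodule.finrank_add_finrank_orthogonal (K := P)
    rw [hPd, finrank_euclideanSpace_fin] at this
    omega
  have hdimL : Module.finrank ℝ Lᗮ = 1 := by
    have := Submodule.finrank_add_finrank_orthogonal (K := L)
    rw [hLd, finrank_euclideanSpace_fin] at this
    omega
  have exu : ∀ K : Submodule ℝ (EuclideanSpace ℝ (Fin (n + 1))),
      Module.finrank ℝ K = 1 → ∃ x, x ∈ K ∧ ‖x‖ = 1 := by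
    intro K hK
    obtain ⟨v, hv, hv0⟩ := Submodule.exists_mem_ne_zero_of_ne_bot (p := K)
      (by intro h; rw [h] at hK; simp at hK)
    exact ⟨‖v‖⁻¹ • v, K.smul_mem _ hv, norm_smul_inv_norm hv0⟩
  obtain ⟨N, hNP, hN1⟩ := exu Pᗮ hdimP
  obtain ⟨ν₀, hν₀L, hν₀1⟩ := exu Lᗮ hdimL
  -- key estimate: N is almost orthogonal to L
  have hkey : ∀ w ∈ L, |(⟪N, w⟫)| ≤ s * ‖w‖ := by
    intro w hw
    rcases eq_or_ne w 0 with rfl | hw0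
    · simp
    have hnw : 0 < ‖w‖ := norm_pos_iff.mpr hw0
    have step : ∀ t : ℝ, 0 < t → t < ρ → t * (|(⟪N, w⟫)| / ‖w‖) ≤ s * ρ := by
      intro t ht htρ
      refine le_of_forall_pos_le_add ?_
      intro δ hδ
      set y : EuclideanSpace ℝ (Fin (n + 1)) := (t / ‖w‖) • w with hydef
      have hyL : y ∈ L := L.smul_mem _ hw
      have hyn : ‖y‖ = t := by
        rw [hydef, norm_smul, Real.norm_eq_abs, abs_div, abs_of_pos ht, abs_of_pos hnw]
        field_simp
      have hyb : y ∈ Metric.ball (0 : EuclideanSpace ℝ (Fin (n + 1))) ρ := by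
        rw [mem_ball_zero_iff, hyn]; exact htρ
      have h1 : Metric.infDist y M ≤ ε₀ * ρ := hLM y ⟨hyL, hyb⟩
      obtain ⟨m, hmM, hym⟩ := (Metric.infDist_lt_iff ⟨0, hM0⟩).1
        (lt_of_le_of_lt h1 (by linarith : ε₀ * ρ < ε₀ * ρ + δ))
      obtain ⟨p, hpP, hmp⟩ := (Metric.infDist_lt_iff ⟨0, P.zero_mem⟩).1 (hMP m hmM)
      have hNp : ⟪N, p⟫ = 0 := by
        have := (Submodule.mem_orthogonal P N).1 hNP p hpP
        rwa [real_inner_comm] at this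
      have hle : |(⟪N, y⟫)| ≤ ‖y - p‖ := by
        calc |(⟪N, y⟫)| = |(⟪N, y - p⟫)| := by rw [inner_sub_right, hNp, sub_zero]
          _ ≤ ‖N‖ * ‖y - p‖ := abs_real_inner_le_norm _ _
          _ = ‖y - p‖ := by rw [hN1, one_mul]
      have hdist : ‖y - p‖ ≤ dist y m + dist m p := by
        rw [← dist_eq_norm]; exact dist_triangle y m p
      have hinner : ⟪N, y⟫ = (t / ‖w‖) * ⟪N, w⟫ := real_inner_smul_right _ _ _
      calc t * (|(⟪N, w⟫)| / ‖w‖) = |(⟪N, y⟫)| := by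
            rw [hinner, abs_mul, abs_of_pos (div_pos ht hnw)]; ring
        _ ≤ ‖y - p‖ := hle
        _ ≤ dist y m + dist m p := hdist
        _ ≤ (ε₀ * ρ + δ) + ε * ρ := add_le_add hym.le hmp.le
        _ = s * ρ + δ := by rw [hs]; ring
    have hlim : ρ * (|(⟪N, w⟫)| / ‖w‖) ≤ s * ρ := by
      have cont : Filter.Tendsto (fun t : ℝ => t * (|(⟪N, w⟫)| / ‖w‖))
          (nhdsWithin ρ (Set.Iio ρ)) (nhds (ρ * (|(⟪N, w⟫)| / ‖w‖))) :=
        ((continuous_id.mul continuous_const).tendsto ρ).mono_left nhdsWithin_le_nhds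
      refine le_of_tendsto cont ?_
      filter_upwards [Ioo_mem_nhdsLT_of_mem (Set.mem_Ioc.mpr ⟨hρ, le_refl ρ⟩)] with t ht
      exact step t ht.1 ht.2
    have : |(⟪N, w⟫)| / ‖w‖ ≤ s := by
      have := (mul_le_mul_iff_right₀ hρ).1 (by linarith [hlim] : ρ * (|(⟪N, w⟫)| / ‖w‖) ≤ ρ * s)
      linarith
    calc |(⟪N, w⟫)| = |(⟪N, w⟫)| / ‖w‖ * ‖w‖ := by field_simp
      _ ≤ s * ‖w‖ := by nlinarith
  -- choose the sign of the normal of L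
  set c : ℝ := ⟪N, ν₀⟫ with hcdef
  set ν : EuclideanSpace ℝ (Fin (n + 1)) := if 0 ≤ c then ν₀ else -ν₀ with hνdef
  have hν1 : ‖ν‖ = 1 := by by_cases h : 0 ≤ c <;> simp [hνdef, h, hν₀1]
  have hνL : ν ∈ Lᗮ := by
    by_cases h : 0 ≤ c <;> simp only [hνdef, h, if_true, if_false]
    · exact hν₀L
    · exact Lᗮ.neg_mem hν₀L
  have hν0 : ν ≠ 0 := by
    intro h; rw [h, norm_zero] at hν1; norm_num at hν1
  have hc : ⟪N, ν⟫ = |c| := by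
    by_cases h : 0 ≤ c
    · simp only [hνdef, h, if_true]; rw [abs_of_nonneg h]
    · simp only [hνdef, h, if_false]
      rw [inner_neg_right, abs_of_neg (not_le.1 h)]
  set c' : ℝ := |c| with hc'def
  have hc'0 : 0 ≤ c' := abs_nonneg c
  have hc'1 : c' ≤ 1 := by
    calc c' ≤ ‖N‖ * ‖ν₀‖ := abs_real_inner_le_norm _ _
      _ = 1 := by rw [hN1, hν₀1, one_mul]
  -- decompose N = c' • ν + W with W ∈ L
  set W : EuclideanSpace ℝ (Fin (n + 1)) := N - c' • ν with hWdef
  have hνν : ⟪ν, ν⟫ = 1 := by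
    rw [real_inner_self_eq_norm_sq, hν1]; norm_num
  have hνW : ⟪ν, W⟫ = 0 := by
    rw [hWdef, inner_sub_right, real_inner_smul_right, hνν, real_inner_comm, hc]; ring
  have hspan : Lᗮ = Submodule.span ℝ {ν} := by
    symm
    apply Submodule.eq_of_le_of_finrank_eq
    · rw [Submodule.span_singleton_le_iff_mem]; exact hνL
    · rw [finrank_span_singleton hν0, hdimL]
  have hWL : W ∈ L := by
    rw [← Submodule.orthogonal_orthogonal L]
    rw [Submodule.mem_orthogonal]
    intro x hx
    rw [hspan, Submodule.mem_span_singleton] at hx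
    obtain ⟨a, rfl⟩ := hx
    rw [real_inner_smul_left, hνW, mul_zero]
  -- norms
  have hNW : ⟪N, W⟫ = 1 - c' ^ 2 := by
    rw [hWdef, inner_sub_right, real_inner_smul_right, real_inner_self_eq_norm_sq, hN1, hc]
    ring
  have hWsq : ‖W‖ ^ 2 = 1 - c' ^ 2 := by
    rw [← real_inner_self_eq_norm_sq, hWdef]
    nth_rewrite 1 [inner_sub_left]
    rw [real_inner_smul_left, hνW, ← hWdef, hNW]; ring
  have hWs : ‖W‖ ^ 2 ≤ s * ‖W‖ := by
    calc ‖W‖ ^ 2 = ⟪N, W⟫ := by rw [hNW, hWsq]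
      _ ≤ |(⟪N, W⟫)| := le_abs_self _
      _ ≤ s * ‖W‖ := hkey W hWL
  have hW2 : ‖W‖ ^ 2 ≤ s ^ 2 := by nlinarith [sq_nonneg (‖W‖ - s), norm_nonneg W]
  -- conclude
  refine ⟨N, ν, hN1, hν1, hNP, hνL, ?_⟩
  have hfin : ‖N - ν‖ ^ 2 ≤ (5 * s / 2) ^ 2 := by
    rw [@norm_sub_sq_real, hN1, hν1, hc]
    nlinarith [hWsq, hW2]
  calc ‖N - ν‖ = Real.sqrt (‖N - ν‖ ^ 2) := (Real.sqrt_sq (norm_nonneg _)).symm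
    _ ≤ Real.sqrt ((5 * s / 2) ^ 2) := Real.sqrt_le_sqrt hfin
    _ = 5 * s / 2 := Real.sqrt_sq (by linarith)
end

section
/- Let Ω ⊂ ℝ^n be open and bounded and let u_σ ∈ C¹(Ω̄) satisfy ∫_Ω Dv·Du_σ/√(1+|Du_σ|²) dH^n ≤ C σ (∫_{Ω'} |Dv| dH^n + 1) for the test function v = (u_σ − l)_+ (with l = sup_{∂Ω}|u_σ| boundary bound), where Ω' = {|Du_σ| > ε₁} and we split the left side over {|Du_σ| ≤ ε₁} and its complement. If ε₁ = σ^{1/2} and σ is small, then ∫_Ω |Dv| dH^n ≤ C' σ^{1/2}, and consequently by the Sobolev inequality ‖v‖_{n/(n−1)} ≤ C'' σ^{1/2}. -/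
open MeasureTheory Set
open scoped ENNReal

variable {n : ℕ} {Ω : Set (EuclideanSpace ℝ (Fin n))}
  {u : EuclideanSpace ℝ (Fin n) → ℝ} {l δ : ℝ}

noncomputable def psiAux (s : ℝ) : ℝ := ∫ t in (0:ℝ)..s, Real.smoothTransition (t - 1)

lemma psiAux_cont : Continuous fun t : ℝ => Real.smoothTransition (t - 1) :=
  Real.smoothTransition.continuous.comp (continuous_id.sub continuous_const)

lemma psiAux_hasDerivAt (s : ℝ) :
    HasDerivAt psiAux (Real.smoothTransition (s - 1)) s := by
  exact (psiAux_cont.integral_hasStrictDerivAt 0 s).hasDerivAt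

lemma psiAux_contDiff : ContDiff ℝ 1 psiAux := by
  rw [contDiff_one_iff_deriv]
  refine ⟨fun s => (psiAux_hasDerivAt s).differentiableAt, ?_⟩
  have : deriv psiAux = fun s => Real.smoothTransition (s - 1) :=
    funext fun s => (psiAux_hasDerivAt s).deriv
  rw [this]; exact psiAux_cont

lemma psiAux_eq_zero {s : ℝ} (h : s ≤ 1) : psiAux s = 0 := by
  unfold psiAux
  rw [intervalIntegral.integral_congr (g := fun _ => (0:ℝ)), intervalIntegral.integral_zero]
  intro t ht
  have ht' : t ≤ 1 := by
    rcases le_total 0 s with h0 | h0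
    · have := ht.2; simp [uIcc_of_le h0] at ht; linarith [ht.2]
    · simp [uIcc_of_ge h0] at ht; linarith [ht.2]
  exact Real.smoothTransition.zero_of_nonpos (by linarith)

lemma psiAux_nonneg (s : ℝ) : 0 ≤ psiAux s := by
  rcases le_total s 0 with h | h
  · rw [psiAux_eq_zero (by linarith)]
  · exact intervalIntegral.integral_nonneg h fun t _ => Real.smoothTransition.nonneg _

lemma psiAux_le (s : ℝ) : psiAux s ≤ max s 0 := by
  rcases le_total s 0 with h | h
  · rw [psiAux_eq_zero (by linarith)]; exact le_max_right _ _
  · refine le_trans ?_ (le_max_left s 0)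
    calc psiAux s ≤ ∫ t in (0:ℝ)..s, (1:ℝ) := by
          refine intervalIntegral.integral_mono_on h
            (psiAux_cont.intervalIntegrable _ _) (intervalIntegrable_const)
            fun t _ => Real.smoothTransition.le_one _
      _ = s := by simp

lemma psiAux_ge (s : ℝ) : s - 2 ≤ psiAux s := by
  rcases le_total s 2 with h | h
  · have := psiAux_nonneg s; linarith
  · have h1 : psiAux s = (∫ t in (0:ℝ)..2, Real.smoothTransition (t - 1))
        + ∫ t in (2:ℝ)..s, Real.smoothTransition (t - 1) := by
      unfold psiAux
      rw [intervalIntegral.integral_add_adjacent_intervals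
        (psiAux_cont.intervalIntegrable _ _) (psiAux_cont.intervalIntegrable _ _)]
    have h2 : (0:ℝ) ≤ ∫ t in (0:ℝ)..2, Real.smoothTransition (t - 1) :=
      intervalIntegral.integral_nonneg (by norm_num) fun t _ => Real.smoothTransition.nonneg _
    have h3 : s - 2 ≤ ∫ t in (2:ℝ)..s, Real.smoothTransition (t - 1) := by
      calc s - 2 = ∫ t in (2:ℝ)..s, (1:ℝ) := by simp
        _ ≤ _ := by
          refine intervalIntegral.integral_mono_on h intervalIntegrable_const
            (psiAux_cont.intervalIntegrable _ _) fun t ht => ?_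
          exact (Real.smoothTransition.one_of_one_le (x := t - 1) (by linarith [ht.1])).ge
    linarith





/-- The approximating function is locally zero off `Ω`. -/
lemma gdelta_loc_zero (hΩ : IsOpen Ω) (hu : ContDiffOn ℝ 1 u (closure Ω))
    (hl : ∀ x ∈ frontier Ω, |u x| ≤ l) (hδ : 0 < δ)
    {x : EuclideanSpace ℝ (Fin n)} (hx : x ∉ Ω) :
    (Ω.indicator (fun y => δ * psiAux ((u y - l)/δ))) =ᶠ[nhds x] fun _ => (0:ℝ) := by
  by_cases hxc : x ∈ closure Ω
  · have hxf : x ∈ frontier Ω := ⟨hxc, by rwa [hΩ.interior_eq]⟩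
    have hux : u x < l + δ := by
      have := hl x hxf
      have := abs_le.1 this
      linarith [this.1, this.2]
    have hcont : ContinuousWithinAt u (closure Ω) x := (hu.continuousOn).continuousWithinAt hxc
    have hpre : {y | u y < l + δ} ∈ nhdsWithin x (closure Ω) :=
      hcont (Iio_mem_nhds hux)
    rcases mem_nhdsWithin.1 hpre with ⟨O, hO, hxO, hsub⟩
    filter_upwards [hO.mem_nhds hxO] with y hy
    by_cases hyΩ : y ∈ Ω
    · have : u y < l + δ := hsub ⟨hy, subset_closure hyΩ⟩
      have hs : (u y - l)/δ ≤ 1 := by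
        rw [div_le_one hδ]; linarith
      simp [Set.indicator_of_mem hyΩ, psiAux_eq_zero hs]
    · simp [Set.indicator_of_notMem hyΩ]
  · filter_upwards [(isOpen_compl_iff.2 isClosed_closure).mem_nhds hxc] with y hy
    have : y ∉ Ω := fun h => hy (subset_closure h)
    simp [Set.indicator_of_notMem this]

lemma gdelta_hasFDerivAt (hΩ : IsOpen Ω) (hu : ContDiffOn ℝ 1 u (closure Ω)) (hδ : 0 < δ)
    {x : EuclideanSpace ℝ (Fin n)} (hx : x ∈ Ω) :
    HasFDerivAt (Ω.indicator (fun y => δ * psiAux ((u y - l)/δ)))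
      (Real.smoothTransition ((u x - l)/δ - 1) • fderiv ℝ u x) x := by
  have huc : ContDiffAt ℝ 1 u x :=
    (hu.mono subset_closure).contDiffAt (hΩ.mem_nhds hx)
  have hud : HasFDerivAt u (fderiv ℝ u x) x :=
    (huc.differentiableAt one_ne_zero).hasFDerivAt
  have hφ : HasDerivAt (fun t : ℝ => δ * psiAux ((t - l)/δ))
      (Real.smoothTransition ((u x - l)/δ - 1)) (u x) := by
    have hinner : HasDerivAt (fun t : ℝ => (t - l)/δ) (1/δ) (u x) := by
      simpa using ((hasDerivAt_id (u x)).sub_const l).div_const δ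
    have := ((psiAux_hasDerivAt ((u x - l)/δ)).comp (u x) hinner).const_mul δ
    have e : δ * (Real.smoothTransition ((u x - l)/δ - 1) * (1/δ))
        = Real.smoothTransition ((u x - l)/δ - 1) := by field_simp
    rw [e] at this
    exact this
  have hcomp := hφ.comp_hasFDerivAt x hud
  refine hcomp.congr_of_eventuallyEq ?_
  filter_upwards [hΩ.mem_nhds hx] with y hy
  simp [Set.indicator_of_mem hy, Function.comp]

lemma gdelta_contDiff (hΩ : IsOpen Ω) (hu : ContDiffOn ℝ 1 u (closure Ω))
    (hl : ∀ x ∈ frontier Ω, |u x| ≤ l) (hδ : 0 < δ) :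
    ContDiff ℝ 1 (Ω.indicator (fun y => δ * psiAux ((u y - l)/δ))) := by
  rw [contDiff_iff_contDiffAt]
  intro x
  by_cases hx : x ∈ Ω
  · have huc : ContDiffAt ℝ 1 u x :=
      (hu.mono subset_closure).contDiffAt (hΩ.mem_nhds hx)
    have h1 : ContDiffAt ℝ 1 (fun y => δ * psiAux ((u y - l)/δ)) x := by
      have h2 : ContDiffAt ℝ 1 (fun t : ℝ => δ * psiAux ((t - l)/δ)) (u x) := by
        exact (psiAux_contDiff.contDiffAt.comp _
          (((contDiffAt_id.sub contDiffAt_const).div_const δ))).const_smul δ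
      exact h2.comp x huc
    refine h1.congr_of_eventuallyEq ?_
    filter_upwards [hΩ.mem_nhds hx] with y hy
    simp [Set.indicator_of_mem hy]
  · exact (contDiffAt_const (c := (0:ℝ))).congr_of_eventuallyEq
      (gdelta_loc_zero hΩ hu hl hδ hx)

lemma gdelta_support (hΩb : Bornology.IsBounded Ω) :
    HasCompactSupport (Ω.indicator (fun y => δ * psiAux ((u y - l)/δ))) := by
  have h1 : IsCompact (closure Ω) :=
    Metric.isCompact_of_isClosed_isBounded isClosed_closure hΩb.closure
  refine h1.of_isClosed_subset (isClosed_tsupport _) ?_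
  exact closure_mono Set.support_indicator_subset

lemma gdelta_fderiv_le (hΩ : IsOpen Ω) (hu : ContDiffOn ℝ 1 u (closure Ω))
    (hl : ∀ x ∈ frontier Ω, |u x| ≤ l) (hδ : 0 < δ)
    {Dv : EuclideanSpace ℝ (Fin n) → EuclideanSpace ℝ (Fin n)}
    (hDv : ∀ x, Dv x = if l < u x then gradient u x else 0)
    (x : EuclideanSpace ℝ (Fin n)) :
    ‖fderiv ℝ (Ω.indicator (fun y => δ * psiAux ((u y - l)/δ))) x‖
      ≤ Ω.indicator (fun y => ‖Dv y‖) x := by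
  by_cases hx : x ∈ Ω
  · rw [(gdelta_hasFDerivAt hΩ hu hδ hx).fderiv, Set.indicator_of_mem hx]
    by_cases hul : u x ≤ l + δ
    · have hs : (u x - l)/δ - 1 ≤ 0 := by
        rw [sub_nonpos, div_le_one hδ]; linarith
      rw [Real.smoothTransition.zero_of_nonpos hs]
      simp [norm_nonneg]
    · push_neg at hul
      have hlu : l < u x := by linarith
      rw [hDv x, if_pos hlu]
      have hnorm : ‖gradient u x‖ = ‖fderiv ℝ u x‖ := by
        rw [show gradient u x
            = (InnerProductSpace.toDual ℝ (EuclideanSpace ℝ (Fin n))).symm (fderiv ℝ u x)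
          from rfl]
        exact LinearIsometryEquiv.norm_map _ _
      rw [hnorm, norm_smul]
      calc ‖((u x - l)/δ - 1).smoothTransition‖ * ‖fderiv ℝ u x‖
          ≤ 1 * ‖fderiv ℝ u x‖ := by
            gcongr
            rw [Real.norm_eq_abs, abs_of_nonneg (Real.smoothTransition.nonneg _)]
            exact Real.smoothTransition.le_one _
        _ = ‖fderiv ℝ u x‖ := one_mul _
  · have h0 : fderiv ℝ (Ω.indicator (fun y => δ * psiAux ((u y - l)/δ))) x = 0 := by
      have h1 := Filter.EventuallyEq.fderiv_eq (𝕜 := ℝ) (gdelta_loc_zero hΩ hu hl hδ hx)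
      rw [h1, fderiv_const_apply]
    rw [h0, Set.indicator_of_notMem hx]
    simp

lemma sobolev_step (hn : 2 ≤ n) (hΩ : IsOpen Ω) (hΩb : Bornology.IsBounded Ω)
    (hu : ContDiffOn ℝ 1 u (closure Ω)) (hl : ∀ x ∈ frontier Ω, |u x| ≤ l) (hδ : 0 < δ)
    {Dv : EuclideanSpace ℝ (Fin n) → EuclideanSpace ℝ (Fin n)}
    (hDv : ∀ x, Dv x = if l < u x then gradient u x else 0)
    (hInt : IntegrableOn (fun x => ‖Dv x‖) Ω volume) :
    ∫⁻ x, (‖Ω.indicator (fun y => δ * psiAux ((u y - l)/δ)) x‖₊ : ℝ≥0∞) ^ ((n:ℝ)/((n:ℝ)-1))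
      ≤ lintegralPowLePowLIntegralFDerivConst
          (volume : Measure (EuclideanSpace ℝ (Fin n))) ((n:ℝ)/((n:ℝ)-1))
        * (ENNReal.ofReal (∫ x in Ω, ‖Dv x‖)) ^ ((n:ℝ)/((n:ℝ)-1)) := by
  have hn1 : (1:ℝ) < (n:ℝ) := by exact_mod_cast hn.trans_lt' one_lt_two
  have hp : Real.HolderConjugate (Module.finrank ℝ (EuclideanSpace ℝ (Fin n)))
      ((n:ℝ)/((n:ℝ)-1)) := by
    rw [finrank_euclideanSpace_fin]
    exact (Real.holderConjugate_iff_eq_conjExponent hn1).2 rfl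
  have hmain := lintegral_pow_le_pow_lintegral_fderiv
    (volume : Measure (EuclideanSpace ℝ (Fin n)))
    (gdelta_contDiff hΩ hu hl hδ) (gdelta_support hΩb) hp
  refine hmain.trans ?_
  gcongr
  calc ∫⁻ x, (‖fderiv ℝ (Ω.indicator (fun y => δ * psiAux ((u y - l)/δ))) x‖₊ : ℝ≥0∞)
      ≤ ∫⁻ x, ENNReal.ofReal (Ω.indicator (fun y => ‖Dv y‖) x) := by
        refine lintegral_mono fun x => ?_
        rw [← enorm_eq_nnnorm, ← ofReal_norm_eq_enorm]
        exact ENNReal.ofReal_le_ofReal (gdelta_fderiv_le hΩ hu hl hδ hDv x)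
    _ = ∫⁻ x, Ω.indicator (fun y => ENNReal.ofReal ‖Dv y‖) x := by
        congr 1; ext x
        by_cases hx : x ∈ Ω <;>
          simp [Set.indicator_of_mem, Set.indicator_of_notMem, hx]
    _ = ∫⁻ x in Ω, ENNReal.ofReal ‖Dv x‖ := lintegral_indicator hΩ.measurableSet _
    _ = ENNReal.ofReal (∫ x in Ω, ‖Dv x‖) := by
        rw [← ofReal_integral_eq_lintegral_ofReal hInt
          (Filter.Eventually.of_forall fun x => norm_nonneg _)]



lemma part1 {n : ℕ} {Ω : Set (EuclideanSpace ℝ (Fin n))} (hΩ : IsOpen Ω)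
    (hΩb : Bornology.IsBounded Ω) {C σ : ℝ} (hC : 0 < C) (hσ : 0 < σ) (hσ1 : σ < 1)
    (hσC : σ < 1/(16*C^2)) {u : EuclideanSpace ℝ (Fin n) → ℝ}
    (hu : ContDiffOn ℝ 1 u (closure Ω)) {l : ℝ}
    {Dv : EuclideanSpace ℝ (Fin n) → EuclideanSpace ℝ (Fin n)}
    (hDv : ∀ x, Dv x = if l < u x then gradient u x else 0)
    (hInt : IntegrableOn (fun x => ‖Dv x‖) Ω volume)
    (henergy : ∫ x in Ω, (inner ℝ (Dv x) (gradient u x) : ℝ) /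
          Real.sqrt (1 + ‖gradient u x‖ ^ 2)
      ≤ C * σ * ((∫ x in {x | x ∈ Ω ∧ σ ^ ((1 : ℝ) / 2) < ‖gradient u x‖}, ‖Dv x‖) + 1)) :
    (∫ x in Ω, ‖Dv x‖) ≤ ((volume Ω).toReal + 4*C + 1) * σ ^ ((1 : ℝ) / 2) := by
  have hrw : σ ^ ((1 : ℝ) / 2) = Real.sqrt σ := (Real.sqrt_eq_rpow σ).symm
  set st := Real.sqrt σ with hstdef
  have hstpos : 0 < st := Real.sqrt_pos.2 hσ
  have hst1 : st ≤ 1 := by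
    rw [hstdef, show (1:ℝ) = Real.sqrt 1 by simp]
    exact Real.sqrt_le_sqrt hσ1.le
  have hss : st * st = σ := Real.mul_self_sqrt hσ.le
  have hCst : C * st ≤ 1/4 := by
    have h2 : (C * st)^2 < (1/4)^2 := by
      have : (C * st)^2 = C^2 * σ := by rw [mul_pow]; rw [sq st, hss]
      rw [this]
      have := mul_lt_mul_of_pos_left hσC (by positivity : (0:ℝ) < C^2)
      calc C^2 * σ < C^2 * (1/(16*C^2)) := this
        _ = 1/16 := by field_simp
        _ = (1/4)^2 := by norm_num
    exact (lt_of_pow_lt_pow_left₀ 2 (by norm_num) h2).le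
  -- basic measurability
  have hgmeas : Measurable fun x => gradient u x := by
    have h1 : Measurable (fderiv ℝ u) := measurable_fderiv ℝ u
    exact ((InnerProductSpace.toDual ℝ
      (EuclideanSpace ℝ (Fin n))).symm.continuous.measurable).comp h1
  set B := {x | x ∈ Ω ∧ σ ^ ((1 : ℝ) / 2) < ‖gradient u x‖} with hBdef
  have hBsub : B ⊆ Ω := fun x hx => hx.1
  have hBmeas : MeasurableSet B := by
    exact hΩ.measurableSet.inter (measurableSet_lt measurable_const hgmeas.norm)
  have hVol : volume Ω < ⊤ := hΩb.measure_lt_top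
  -- the energy integrand
  set F := fun x => (inner ℝ (Dv x) (gradient u x) : ℝ) /
      Real.sqrt (1 + ‖gradient u x‖ ^ 2) with hFdef
  have hF_eq : ∀ x, F x = ‖Dv x‖ * ‖gradient u x‖ / Real.sqrt (1 + ‖gradient u x‖ ^ 2) := by
    intro x
    by_cases h : l < u x
    · simp only [hFdef, hDv x, if_pos h, real_inner_self_eq_norm_mul_norm]
    · simp [hFdef, hDv x, if_neg h]
  have hF_nonneg : ∀ x, 0 ≤ F x := fun x => by
    rw [hF_eq]
    exact div_nonneg (mul_nonneg (norm_nonneg _) (norm_nonneg _)) (Real.sqrt_nonneg _)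
  have hsqrt_pos : ∀ x, 0 < Real.sqrt (1 + ‖gradient u x‖ ^ 2) := fun x =>
    Real.sqrt_pos.2 (by positivity)
  have hF_le : ∀ x, F x ≤ ‖Dv x‖ := by
    intro x
    rw [hF_eq, div_le_iff₀ (hsqrt_pos x)]
    have h1 : ‖gradient u x‖ ≤ Real.sqrt (1 + ‖gradient u x‖ ^ 2) := by
      rw [show ‖gradient u x‖ = Real.sqrt (‖gradient u x‖^2) by
        rw [Real.sqrt_sq (norm_nonneg _)]]
      exact Real.sqrt_le_sqrt (by nlinarith [Real.sq_sqrt (by positivity : (0:ℝ) ≤ ‖gradient u x‖^2)])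
    calc ‖Dv x‖ * ‖gradient u x‖ ≤ ‖Dv x‖ * Real.sqrt (1 + ‖gradient u x‖ ^ 2) := by
          exact mul_le_mul_of_nonneg_left h1 (norm_nonneg _)
      _ = _ := rfl
  -- measurability / integrability of F on Ω
  have hW : IsOpen (Ω ∩ u ⁻¹' Ioi l) :=
    (hu.continuousOn.mono subset_closure).isOpen_inter_preimage hΩ isOpen_Ioi
  have hDv'meas : Measurable ((Ω ∩ u ⁻¹' Ioi l).indicator fun x => gradient u x) :=
    hgmeas.indicator hW.measurableSet
  have hDv_ae : Dv =ᵐ[volume.restrict Ω] (Ω ∩ u ⁻¹' Ioi l).indicator fun x => gradient u x := by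
    refine (ae_restrict_iff' hΩ.measurableSet).2 (Filter.Eventually.of_forall fun x hx => ?_)
    by_cases h : l < u x
    · rw [hDv x, if_pos h, Set.indicator_of_mem (Set.mem_inter hx h)]
    · rw [hDv x, if_neg h, Set.indicator_of_notMem]
      exact fun hmem => h hmem.2
  have hF_aesm : AEStronglyMeasurable F (volume.restrict Ω) := by
    have h1 : Measurable fun x => (inner ℝ (((Ω ∩ u ⁻¹' Ioi l).indicator fun x => gradient u x) x)
        (gradient u x) : ℝ) / Real.sqrt (1 + ‖gradient u x‖ ^ 2) := by
      exact (hDv'meas.inner hgmeas).div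
        ((Real.continuous_sqrt.measurable).comp ((measurable_const.add (hgmeas.norm.pow measurable_const))))
    refine (h1.aestronglyMeasurable).congr ?_
    filter_upwards [hDv_ae] with x hx
    show _ = inner ℝ (Dv x) (gradient u x) / Real.sqrt (1 + ‖gradient u x‖ ^ 2)
    rw [hx]
  have hF_int : IntegrableOn F Ω volume := by
    refine Integrable.mono hInt hF_aesm ?_
    refine Filter.Eventually.of_forall fun x => ?_
    rw [Real.norm_eq_abs, abs_of_nonneg (hF_nonneg x), Real.norm_eq_abs,
      abs_of_nonneg (norm_nonneg _)]
    exact hF_le x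
  -- lower bound on B
  have hFB : ∀ x ∈ B, st/2 * ‖Dv x‖ ≤ F x := by
    intro x hx
    have hxt : st < ‖gradient u x‖ := by
      have := hx.2; rwa [hrw] at this
    set a := ‖Dv x‖
    set t := ‖gradient u x‖
    have ha : 0 ≤ a := norm_nonneg _
    have ht : 0 < t := hstpos.trans hxt
    have hub : Real.sqrt (1 + t^2) ≤ 1 + t := by
      rw [show (1:ℝ) + t = Real.sqrt ((1+t)^2) by rw [Real.sqrt_sq (by linarith)]]
      exact Real.sqrt_le_sqrt (by nlinarith)
    rw [hF_eq, le_div_iff₀ (hsqrt_pos x)]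
    calc st/2 * a * Real.sqrt (1 + t^2) ≤ st/2 * a * (1 + t) := by
          exact mul_le_mul_of_nonneg_left hub (by positivity)
      _ ≤ a * t := by nlinarith [mul_nonneg ha (sub_nonneg.2 hxt.le), mul_nonneg ha (sub_nonneg.2 hst1)]
  -- absorption
  set X := ∫ x in B, ‖Dv x‖ with hXdef
  have hIntB : IntegrableOn (fun x => ‖Dv x‖) B volume := hInt.mono_set hBsub
  have hX0 : 0 ≤ X := integral_nonneg fun x => norm_nonneg _
  have step1 : st/2 * X ≤ ∫ x in B, F x := by
    rw [hXdef, ← integral_const_mul]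
    exact setIntegral_mono_on (hIntB.const_mul _) (hF_int.mono_set hBsub) hBmeas hFB
  have step2 : (∫ x in B, F x) ≤ ∫ x in Ω, F x := by
    refine setIntegral_mono_set hF_int ?_ (HasSubset.Subset.eventuallyLE hBsub)
    exact Filter.Eventually.of_forall fun x => hF_nonneg x
  have step3 : (∫ x in Ω, F x) ≤ C * σ * (X + 1) := henergy
  have hXbound : X ≤ 4 * C * st := by
    have h1 : st/2 * X ≤ C * σ * (X + 1) := le_trans step1 (le_trans step2 step3)
    nlinarith [mul_le_mul_of_nonneg_right hCst hX0, hstpos, hss]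
  -- split the integral
  have hsplit : (∫ x in Ω, ‖Dv x‖) = (∫ x in Ω \ B, ‖Dv x‖) + X := by
    rw [hXdef, ← setIntegral_union (disjoint_sdiff_left) hBmeas
      (hInt.mono_set diff_subset) hIntB, diff_union_of_subset hBsub]
  have hA_bound : (∫ x in Ω \ B, ‖Dv x‖) ≤ (volume Ω).toReal * st := by
    have h1 : ∀ x ∈ Ω \ B, ‖Dv x‖ ≤ st := by
      intro x hx
      by_cases h : l < u x
      · rw [hDv x, if_pos h]
        by_contra hcon
        push_neg at hcon
        have : x ∈ B := ⟨hx.1, by rw [hrw]; exact hcon⟩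
        exact hx.2 this
      · rw [hDv x, if_neg h]; simpa using hstpos.le
    calc (∫ x in Ω \ B, ‖Dv x‖) ≤ ∫ _x in Ω \ B, st := by
          refine setIntegral_mono_on (hInt.mono_set diff_subset) ?_
            (hΩ.measurableSet.diff hBmeas) h1
          exact integrableOn_const ((measure_mono diff_subset).trans_lt hVol).ne
      _ = (volume (Ω \ B)).toReal * st := by rw [setIntegral_const, smul_eq_mul, measureReal_def]
      _ ≤ (volume Ω).toReal * st := by
          refine mul_le_mul_of_nonneg_right ?_ hstpos.le
          exact ENNReal.toReal_mono hVol.ne (measure_mono diff_subset)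
  rw [hrw]
  calc (∫ x in Ω, ‖Dv x‖) = (∫ x in Ω \ B, ‖Dv x‖) + X := hsplit
    _ ≤ (volume Ω).toReal * st + 4 * C * st := add_le_add hA_bound hXbound
    _ ≤ ((volume Ω).toReal + 4*C + 1) * st := by nlinarith [ENNReal.toReal_nonneg (a := volume Ω), hstpos]


/-- Gradient absorption and Sobolev estimate from the existence proof:
on a bounded open `Ω ⊆ ℝ^n`, if `u_σ ∈ C¹(Ω̄)` with boundary bound `l`,
`v = (u_σ - l)₊` and `Dv = Du_σ · 1_{u_σ > l}` satisfy the tested energy inequality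
`∫_Ω Dv·Du_σ/√(1+|Du_σ|²) ≤ C σ (∫_{|Du_σ| > ε₁} |Dv| + 1)` with `ε₁ = σ^{1/2}`, then for
all small `σ`: `∫_Ω |Dv| ≤ C' σ^{1/2}` and, by the Sobolev inequality,
`‖v‖_{n/(n-1)} ≤ C'' σ^{1/2}`. -/
theorem stmt17 (n : ℕ) (hn : 2 ≤ n)
    (Ω : Set (EuclideanSpace ℝ (Fin n))) (hΩ : IsOpen Ω)
    (hΩb : Bornology.IsBounded Ω) (C : ℝ) (hC : 0 < C) :
    ∃ σ₀ > (0 : ℝ), ∃ C' > (0 : ℝ), ∃ C'' > (0 : ℝ),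
      ∀ σ ∈ Set.Ioo (0 : ℝ) σ₀,
      ∀ u : EuclideanSpace ℝ (Fin n) → ℝ, ContDiffOn ℝ 1 u (closure Ω) →
      ∀ l : ℝ, (∀ x ∈ frontier Ω, |u x| ≤ l) →
      ∀ Dv : EuclideanSpace ℝ (Fin n) → EuclideanSpace ℝ (Fin n),
        (∀ x, Dv x = if l < u x then gradient u x else 0) →
        IntegrableOn (fun x => ‖Dv x‖) Ω volume →
        (∫ x in Ω, (inner ℝ (Dv x) (gradient u x) : ℝ) /
              Real.sqrt (1 + ‖gradient u x‖ ^ 2)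
          ≤ C * σ * ((∫ x in {x | x ∈ Ω ∧ σ ^ ((1 : ℝ) / 2) < ‖gradient u x‖},
              ‖Dv x‖) + 1)) →
        (∫ x in Ω, ‖Dv x‖) ≤ C' * σ ^ ((1 : ℝ) / 2) ∧
        (∫ x in Ω, max (u x - l) 0 ^ ((n : ℝ) / ((n : ℝ) - 1))) ^ (((n : ℝ) - 1) / n)
          ≤ C'' * σ ^ ((1 : ℝ) / 2) := by
  have hn1 : (1:ℝ) < (n:ℝ) := by exact_mod_cast hn.trans_lt' one_lt_two
  have hn0 : (0:ℝ) < (n:ℝ) - 1 := by linarith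
  set p : ℝ := (n:ℝ)/((n:ℝ)-1) with hpdef
  set q : ℝ := ((n:ℝ)-1)/(n:ℝ) with hqdef
  have hp_pos : 0 < p := by positivity
  have hq_pos : 0 < q := by positivity
  have hpq : p * q = 1 := by rw [hpdef, hqdef]; field_simp
  set K : NNReal := lintegralPowLePowLIntegralFDerivConst
    (volume : Measure (EuclideanSpace ℝ (Fin n))) p with hKdef
  set Cp : ℝ := (volume Ω).toReal + 4*C + 1 with hCpdef
  have hCp_pos : 0 < Cp := by
    have := ENNReal.toReal_nonneg (a := volume Ω); rw [hCpdef]; linarith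
  refine ⟨min 1 (1/(16*C^2)), by positivity, Cp, hCp_pos,
    ((K:ℝ) ^ q + 1) * Cp, by positivity, ?_⟩
  rintro σ ⟨hσ0, hσlt⟩ u hu l hl Dv hDv hInt henergy
  have hσ1 : σ < 1 := hσlt.trans_le (min_le_left _ _)
  have hσC : σ < 1/(16*C^2) := hσlt.trans_le (min_le_right _ _)
  have hs_nonneg : 0 ≤ σ ^ ((1:ℝ)/2) := Real.rpow_nonneg hσ0.le _
  have h1 : (∫ x in Ω, ‖Dv x‖) ≤ Cp * σ ^ ((1:ℝ)/2) :=
    part1 hΩ hΩb hC hσ0 hσ1 hσC hu hDv hInt henergy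
  refine ⟨h1, ?_⟩
  -- part 2
  set M : ℝ := ∫ x in Ω, ‖Dv x‖ with hMdef
  have hM0 : 0 ≤ M := integral_nonneg fun x => norm_nonneg _
  set R : ℝ≥0∞ := (K : ℝ≥0∞) * (ENNReal.ofReal M) ^ p with hRdef
  have hstep : ∀ δ : ℝ, 0 < δ →
      ∫⁻ x, (‖Ω.indicator (fun y => δ * psiAux ((u y - l)/δ)) x‖₊ : ℝ≥0∞) ^ p ≤ R :=
    fun δ hδ => sobolev_step hn hΩ hΩb hu hl hδ hDv hInt
  set v : EuclideanSpace ℝ (Fin n) → ℝ := fun x => max (u x - l) 0 with hvdef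
  set gk : ℕ → EuclideanSpace ℝ (Fin n) → ℝ := fun k =>
    Ω.indicator (fun y => (1/((k:ℝ)+1)) * psiAux ((u y - l)/(1/((k:ℝ)+1)))) with hgkdef
  have hδk : ∀ k : ℕ, (0:ℝ) < 1/((k:ℝ)+1) := fun k => by positivity
  have hgk_nonneg : ∀ k x, 0 ≤ gk k x := by
    intro k x
    simp only [hgkdef]
    by_cases hx : x ∈ Ω
    · rw [Set.indicator_of_mem hx]
      exact mul_nonneg (hδk k).le (psiAux_nonneg _)
    · rw [Set.indicator_of_notMem hx]
  have htend : ∀ x ∈ Ω, Filter.Tendsto (fun k => ENNReal.ofReal (gk k x ^ p)) Filter.atTop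
      (nhds (ENNReal.ofReal (v x ^ p))) := by
    intro x hx
    have hbase : Filter.Tendsto (fun k => gk k x) Filter.atTop (nhds (v x)) := by
      have hup : ∀ k : ℕ, gk k x ≤ v x := by
        intro k
        simp only [hgkdef]
        rw [Set.indicator_of_mem hx]
        calc (1/((k:ℝ)+1)) * psiAux ((u x - l)/(1/((k:ℝ)+1)))
            ≤ (1/((k:ℝ)+1)) * max ((u x - l)/(1/((k:ℝ)+1))) 0 :=
              mul_le_mul_of_nonneg_left (psiAux_le _) (hδk k).le
          _ = v x := by
              rw [hvdef, mul_max_of_nonneg _ _ (hδk k).le, mul_zero,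
                mul_div_cancel₀ _ (hδk k).ne']
      have hlow : ∀ k : ℕ, v x - 2 * (1/((k:ℝ)+1)) ≤ gk k x := by
        intro k
        simp only [hgkdef]
        rw [Set.indicator_of_mem hx]
        rcases le_total (u x - l) 0 with h | h
        · have hv0 : v x = 0 := max_eq_right h
          rw [hv0]
          have := mul_nonneg (hδk k).le (psiAux_nonneg ((u x - l)/(1/((k:ℝ)+1))))
          linarith [hδk k]
        · have hv : v x = u x - l := max_eq_left h
          rw [hv]
          have h2 := psiAux_ge ((u x - l)/(1/((k:ℝ)+1)))
          have h3 := mul_le_mul_of_nonneg_left h2 (hδk k).le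
          rw [mul_sub, mul_div_cancel₀ _ (hδk k).ne'] at h3
          linarith
      have hlim : Filter.Tendsto (fun k : ℕ => v x - 2 * (1/((k:ℝ)+1))) Filter.atTop
          (nhds (v x)) := by
        have h0 : Filter.Tendsto (fun k : ℕ => (1:ℝ)/((k:ℝ)+1)) Filter.atTop (nhds 0) :=
          tendsto_one_div_add_atTop_nhds_zero_nat
        have := (tendsto_const_nhds (x := v x)).sub ((h0.const_mul 2))
        simpa using this
      exact tendsto_of_tendsto_of_tendsto_of_le_of_le hlim tendsto_const_nhds hlow hup
    have hcont : ContinuousAt (fun y : ℝ => ENNReal.ofReal (y ^ p)) (v x) :=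
      (ENNReal.continuous_ofReal.continuousAt).comp
        (Real.continuousAt_rpow_const _ _ (Or.inr hp_pos.le))
    exact hcont.tendsto.comp hbase
  have hT : ∫⁻ x in Ω, ENNReal.ofReal (v x ^ p) ≤ R := by
    have hmeas : ∀ k : ℕ, AEMeasurable (fun x => ENNReal.ofReal (gk k x ^ p))
        (volume.restrict Ω) := by
      intro k
      have hc : Continuous (gk k) :=
        (gdelta_contDiff hΩ hu hl (hδk k)).continuous
      exact ((ENNReal.continuous_ofReal.comp
        ((Real.continuous_rpow_const hp_pos.le).comp hc)).measurable).aemeasurable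
    calc ∫⁻ x in Ω, ENNReal.ofReal (v x ^ p)
        = ∫⁻ x in Ω, Filter.liminf (fun k => ENNReal.ofReal (gk k x ^ p)) Filter.atTop := by
          refine setLIntegral_congr_fun hΩ.measurableSet
            (fun x hx => ?_)
          exact ((htend x hx).liminf_eq).symm
      _ ≤ Filter.liminf (fun k => ∫⁻ x in Ω, ENNReal.ofReal (gk k x ^ p)) Filter.atTop :=
          lintegral_liminf_le' hmeas
      _ ≤ R := by
          have hband : ∀ k : ℕ, (∫⁻ x in Ω, ENNReal.ofReal (gk k x ^ p)) ≤ R := by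
            intro k
            calc ∫⁻ x in Ω, ENNReal.ofReal (gk k x ^ p)
                ≤ ∫⁻ x, ENNReal.ofReal (gk k x ^ p) := setLIntegral_le_lintegral _ _
              _ = ∫⁻ x, (‖gk k x‖₊ : ℝ≥0∞) ^ p := by
                  refine lintegral_congr fun x => ?_
                  rw [← enorm_eq_nnnorm, Real.enorm_eq_ofReal (hgk_nonneg k x),
                    ENNReal.ofReal_rpow_of_nonneg (hgk_nonneg k x) hp_pos.le]
              _ ≤ R := hstep _ (hδk k)
          calc Filter.liminf (fun k => ∫⁻ x in Ω, ENNReal.ofReal (gk k x ^ p)) Filter.atTop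
              ≤ Filter.liminf (fun _ : ℕ => R) Filter.atTop :=
                Filter.liminf_le_liminf (Filter.Eventually.of_forall hband)
            _ = R := Filter.liminf_const R
  have hRfin : R ≠ ⊤ := by
    rw [hRdef]
    exact ENNReal.mul_ne_top ENNReal.coe_ne_top
      (ENNReal.rpow_ne_top_of_nonneg hp_pos.le ENNReal.ofReal_ne_top)
  have hv_cont : ContinuousOn v Ω :=
    ((hu.continuousOn.mono subset_closure).sub continuousOn_const).sup continuousOn_const
  have hvp_aesm : AEStronglyMeasurable (fun x => v x ^ p) (volume.restrict Ω) := by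
    refine ContinuousOn.aestronglyMeasurable ?_ hΩ.measurableSet
    exact hv_cont.rpow_const fun x hx => Or.inr hp_pos.le
  have hInt_eq : (∫ x in Ω, v x ^ p) = (∫⁻ x in Ω, ENNReal.ofReal (v x ^ p)).toReal := by
    rw [integral_eq_lintegral_of_nonneg_ae
      (Filter.Eventually.of_forall fun x => Real.rpow_nonneg (le_max_right _ _) _) hvp_aesm]
  have hIle : (∫ x in Ω, v x ^ p) ≤ (K:ℝ) * M ^ p := by
    rw [hInt_eq]
    calc (∫⁻ x in Ω, ENNReal.ofReal (v x ^ p)).toReal ≤ R.toReal :=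
          ENNReal.toReal_mono hRfin hT
      _ = (K:ℝ) * M ^ p := by
          rw [hRdef, ENNReal.toReal_mul, ENNReal.coe_toReal, ← ENNReal.toReal_rpow,
            ENNReal.toReal_ofReal hM0]
  have hInonneg : 0 ≤ ∫ x in Ω, v x ^ p :=
    integral_nonneg fun x => Real.rpow_nonneg (le_max_right _ _) _
  have hfin1 : (∫ x in Ω, v x ^ p) ^ q ≤ ((K:ℝ) * M ^ p) ^ q :=
    Real.rpow_le_rpow hInonneg hIle hq_pos.le
  have heq : ((K:ℝ) * M ^ p) ^ q = (K:ℝ) ^ q * M := by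
    rw [Real.mul_rpow K.coe_nonneg (Real.rpow_nonneg hM0 _), ← Real.rpow_mul hM0, hpq,
      Real.rpow_one]
  have hKq : 0 ≤ (K:ℝ) ^ q := Real.rpow_nonneg K.coe_nonneg _
  calc (∫ x in Ω, v x ^ p) ^ q ≤ (K:ℝ) ^ q * M := by rw [← heq]; exact hfin1
    _ ≤ (K:ℝ) ^ q * (Cp * σ ^ ((1:ℝ)/2)) := mul_le_mul_of_nonneg_left h1 hKq
    _ ≤ ((K:ℝ) ^ q + 1) * Cp * σ ^ ((1:ℝ)/2) := by
        nlinarith [mul_nonneg hCp_pos.le hs_nonneg]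
end
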